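/- Conversely, let ξ be a random variable with T_ξ(x) ≤ exp(−C₂ x^m (ln x)^{−mr}) for all x > e, where C₂ > 0, m > 0, r ∈ ℝ. Then there is C₁ = C₁(C₂, m, r) > 0 with |ξ|_p ≤ C₁ p^{1/m} (ln p)^r for all p ≥ 2. -/

import Mathlib

open MeasureTheory Real Set Filter NNReal
open scoped ENNReal
set_option maxHeartbeats 1000000

lemma sup_bound {f : ℝ → ℝ} {a c : ℝ} (hf : ContinuousOn f (Ici a))
    (h : ∀ᶠ x in atTop, f x ≤ c) : ∃ C, ∀ x, a ≤ x → f x ≤ C := by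
  obtain ⟨R, hR⟩ := eventually_atTop.mp h
  obtain ⟨C₀, hC₀⟩ := (isCompact_Icc (a := a) (b := R)).bddAbove_image
    (hf.mono (Icc_subset_Ici_self))
  refine ⟨max c C₀, fun x hx => ?_⟩
  rcases le_or_gt x R with hxR | hxR
  · exact le_max_of_le_right (hC₀ (Set.mem_image_of_mem f ⟨hx, hxR⟩))
  · exact le_max_of_le_left (hR x hxR.le)

-- continuity of log on [2, ∞)
lemma logc2 : ContinuousOn Real.log (Ici 2) :=
  Real.continuousOn_log.mono (fun x hx => by
    simp only [mem_compl_iff, mem_singleton_iff]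
    intro h; rw [h] at hx; simp only [mem_Ici] at hx; norm_num at hx)

lemma logc1 : ContinuousOn Real.log (Ici 1) :=
  Real.continuousOn_log.mono (fun x hx => by
    simp only [mem_compl_iff, mem_singleton_iff]
    intro h; rw [h] at hx; simp only [mem_Ici] at hx; norm_num at hx)

lemma loglogc2 : ContinuousOn (fun p : ℝ => Real.log (Real.log p)) (Ici 2) := by
  apply Real.continuousOn_log.comp logc2
  intro x hx
  simp only [mem_compl_iff, mem_singleton_iff]
  have : (0:ℝ) < Real.log 2 := Real.log_pos one_lt_two
  have h2 := Real.log_le_log two_pos hx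
  exact ne_of_gt (lt_of_lt_of_le this h2)

lemma keylog {c : ℝ} (hc : 0 < c) :
    ∀ᶠ p : ℝ in atTop, |Real.log (Real.log p)| ≤ c * Real.log p := by
  have h1 := Asymptotics.isLittleO_iff.mp Real.isLittleO_log_id_atTop hc
  have h2 := Real.tendsto_log_atTop.eventually h1
  filter_upwards [h2, Real.tendsto_log_atTop.eventually_ge_atTop 0] with p hp hp0
  simpa [Real.norm_eq_abs, abs_of_nonneg hp0] using hp

/-- The key analytic lemma: choice of `K` so that `t^p e^{-φ(t)/2} ≤ D^p`. -/
lemma key_exists (C₂ m r : ℝ) (hC₂ : 0 < C₂) (hm : 0 < m) :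
    ∃ K : ℝ, 1 ≤ K ∧ ∀ p, 2 ≤ p → ∀ t, Real.exp 2 ≤ t →
      t ^ p * Real.exp (-(C₂ * t ^ m * Real.log t ^ (-(m * r))) / 2)
        ≤ (K * p ^ (1/m) * Real.log p ^ r) ^ p := by
  have log2pos : (0:ℝ) < Real.log 2 := Real.log_pos one_lt_two
  have hm' : m ≠ 0 := hm.ne'
  set q := m * r with hqdef
  -- Step B : S₀ and K₀
  have hf₀c : ContinuousOn
      (fun p => -(1/(2*m)) * Real.log p - r * Real.log (Real.log p)) (Ici 2) :=
    (continuousOn_const.mul logc2).sub (continuousOn_const.mul loglogc2)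
  have hf₀ev : ∀ᶠ p : ℝ in atTop,
      -(1/(2*m)) * Real.log p - r * Real.log (Real.log p) ≤ 0 := by
    have hc : 0 < 1/(2*m*(|r|+1)) := by positivity
    filter_upwards [keylog hc, Real.tendsto_log_atTop.eventually_ge_atTop 0] with p h1 h2
    have h3 : -(r * Real.log (Real.log p)) ≤ |r| * |Real.log (Real.log p)| := by
      calc -(r * Real.log (Real.log p)) ≤ |r * Real.log (Real.log p)| := neg_le_abs _
        _ = |r| * |Real.log (Real.log p)| := abs_mul _ _
    have h4 : |r| * |Real.log (Real.log p)| ≤ |r| * (1/(2*m*(|r|+1)) * Real.log p) :=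
      mul_le_mul_of_nonneg_left h1 (abs_nonneg r)
    have h5 : |r| * (1/(2*m*(|r|+1))) ≤ 1/(2*m) := by
      rw [mul_one_div, div_le_div_iff₀ (by positivity) (by positivity)]
      nlinarith [abs_nonneg r]
    have h6 : |r| * (1/(2*m*(|r|+1)) * Real.log p) ≤ (1/(2*m)) * Real.log p := by
      rw [← mul_assoc]
      exact mul_le_mul_of_nonneg_right h5 h2
    linarith
  obtain ⟨S₀, hS₀⟩ := sup_bound hf₀c hf₀ev
  set K₀ := Real.exp (max S₀ 1) with hK₀def
  have hK₀pos : 0 < K₀ := Real.exp_pos _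
  have hlogK₀ : Real.log K₀ = max S₀ 1 := Real.log_exp _
  have hK₀1 : 1 ≤ Real.log K₀ := by rw [hlogK₀]; exact le_max_right _ _
  have hlogK₀pos : 0 < Real.log K₀ := lt_of_lt_of_le one_pos hK₀1
  set D₀ : ℝ → ℝ := fun p => K₀ * p ^ (1/m) * Real.log p ^ r with hD₀def
  -- basic facts for p ≥ 2
  have hppos : ∀ p : ℝ, 2 ≤ p → (0:ℝ) < p := fun p hp => lt_of_lt_of_le two_pos hp
  have hlp : ∀ p : ℝ, 2 ≤ p → Real.log 2 ≤ Real.log p := fun p hp => Real.log_le_log two_pos hp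
  have hlppos : ∀ p : ℝ, 2 ≤ p → 0 < Real.log p := fun p hp =>
    lt_of_lt_of_le log2pos (hlp p hp)
  have hD₀pos : ∀ p : ℝ, 2 ≤ p → 0 < D₀ p := fun p hp =>
    mul_pos (mul_pos hK₀pos (Real.rpow_pos_of_pos (hppos p hp) _))
      (Real.rpow_pos_of_pos (hlppos p hp) _)
  have hD₀log : ∀ p : ℝ, 2 ≤ p → Real.log (D₀ p)
      = Real.log K₀ + (1/m) * Real.log p + r * Real.log (Real.log p) := by
    intro p hp
    rw [hD₀def]
    simp only
    rw [Real.log_mul (by positivity) (Real.rpow_pos_of_pos (hlppos p hp) _).ne',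
      Real.log_mul hK₀pos.ne' (Real.rpow_pos_of_pos (hppos p hp) _).ne',
      Real.log_rpow (hppos p hp), Real.log_rpow (hlppos p hp)]
  have h2a : (1:ℝ)/m = 2 * (1/(2*m)) := by field_simp
  have hD₀lb : ∀ p : ℝ, 2 ≤ p → (1/(2*m)) * Real.log p ≤ Real.log (D₀ p) := by
    intro p hp
    have h1 := hS₀ p hp
    have h2 : S₀ ≤ Real.log K₀ := by rw [hlogK₀]; exact le_max_left _ _
    rw [hD₀log p hp]
    rw [h2a]
    linarith
  have hD₀logpos : ∀ p : ℝ, 2 ≤ p → 0 < Real.log (D₀ p) := by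
    intro p hp
    have h1 : 0 < (1/(2*m)) * Real.log p := mul_pos (by positivity) (hlppos p hp)
    linarith [hD₀lb p hp]
  -- Step C : Mc and β₂
  obtain ⟨Mc, hMc⟩ : ∃ Mc, ∀ p, 2 ≤ p → |Real.log (Real.log p)| ≤ Mc * Real.log p := by
    have hev : ∀ᶠ p : ℝ in atTop, |Real.log (Real.log p)| / Real.log p ≤ 1 := by
      filter_upwards [keylog one_pos, eventually_ge_atTop (2:ℝ)] with p h1 h2
      rw [div_le_one (hlppos p h2)]
      simpa using h1
    obtain ⟨C, hC⟩ := sup_bound (f := fun p => |Real.log (Real.log p)| / Real.log p)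
      (loglogc2.abs.div logc2 (fun x hx => (hlppos x hx).ne')) hev
    refine ⟨C, fun p hp => ?_⟩
    have := hC p hp
    rwa [div_le_iff₀ (hlppos p hp)] at this
  have hMc0 : 0 ≤ Mc := by
    by_contra h
    push_neg at h
    nlinarith [hMc 2 le_rfl, abs_nonneg (Real.log (Real.log 2)),
      mul_neg_of_neg_of_pos h log2pos]
  set β₂ := Real.log K₀ / Real.log 2 + 1/m + |r| * Mc with hβ₂def
  have hβ₂pos : 0 < β₂ := by
    rw [hβ₂def]
    have h1 : 0 < Real.log K₀ / Real.log 2 := div_pos hlogK₀pos log2pos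
    have h2 : 0 < 1/m := by positivity
    have h3 := mul_nonneg (abs_nonneg r) hMc0
    linarith
  have hD₀ub : ∀ p : ℝ, 2 ≤ p → Real.log (D₀ p) ≤ β₂ * Real.log p := by
    intro p hp
    rw [hD₀log p hp, hβ₂def]
    have h1 : Real.log K₀ ≤ Real.log K₀ / Real.log 2 * Real.log p := by
      rw [div_mul_eq_mul_div, le_div_iff₀ log2pos]
      exact mul_le_mul_of_nonneg_left (hlp p hp) hlogK₀pos.le
    have h2 : r * Real.log (Real.log p) ≤ |r| * Mc * Real.log p := by
      calc r * Real.log (Real.log p) ≤ |r * Real.log (Real.log p)| := le_abs_self _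
        _ = |r| * |Real.log (Real.log p)| := abs_mul _ _
        _ ≤ |r| * (Mc * Real.log p) := mul_le_mul_of_nonneg_left (hMc p hp) (abs_nonneg r)
        _ = |r| * Mc * Real.log p := by ring
    nlinarith
  -- Step D : cstar
  obtain ⟨cstar, hcstar1, hcstar⟩ : ∃ c : ℝ, 1 ≤ c ∧ ∀ s : ℝ, 1 ≤ s →
      (1 + Real.log s) ^ |q| ≤ c * s ^ (m/2) := by
    have hcont : ContinuousOn (fun s : ℝ => (1 + Real.log s) ^ |q| / s ^ (m/2)) (Ici 1) := by
      apply ContinuousOn.div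
      · apply ContinuousOn.rpow_const (continuousOn_const.add logc1)
        intro x hx
        left
        have : 0 ≤ Real.log x := Real.log_nonneg hx
        exact ne_of_gt (show (0:ℝ) < 1 + Real.log x by linarith)
      · apply ContinuousOn.rpow_const continuousOn_id
        intro x hx
        left
        exact ne_of_gt (lt_of_lt_of_le one_pos hx)
      · intro x hx
        exact (Real.rpow_pos_of_pos (lt_of_lt_of_le one_pos hx) _).ne'
    have hev : ∀ᶠ s : ℝ in atTop, (1 + Real.log s) ^ |q| / s ^ (m/2) ≤ 1 := by
      have h2q : (0:ℝ) < 2 ^ (-|q|) := by positivity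
      have hlo := Asymptotics.isLittleO_iff.mp
        (isLittleO_log_rpow_rpow_atTop |q| (by positivity : (0:ℝ) < m/2)) h2q
      filter_upwards [hlo, Real.tendsto_log_atTop.eventually_ge_atTop 1,
          eventually_gt_atTop (0:ℝ)] with s h1 h2 h3
      rw [div_le_one (Real.rpow_pos_of_pos h3 _)]
      have hb1 : 1 + Real.log s ≤ 2 * Real.log s := by linarith
      have hb2 : (1 + Real.log s) ^ |q| ≤ (2 * Real.log s) ^ |q| :=
        Real.rpow_le_rpow (by linarith) hb1 (abs_nonneg q)
      have hb3 : (2 * Real.log s) ^ |q| = 2 ^ |q| * Real.log s ^ |q| :=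
        Real.mul_rpow (by norm_num) (by linarith)
      have hb4 : Real.log s ^ |q| ≤ 2 ^ (-|q|) * s ^ (m/2) := by
        have := h1
        rw [Real.norm_eq_abs, Real.norm_eq_abs] at this
        rw [abs_of_nonneg (Real.rpow_nonneg (by linarith) _),
          abs_of_nonneg (Real.rpow_nonneg h3.le _)] at this
        exact this
      calc (1 + Real.log s) ^ |q| ≤ 2 ^ |q| * (2 ^ (-|q|) * s ^ (m/2)) :=
            le_trans hb2 (by
              rw [hb3]
              exact mul_le_mul_of_nonneg_left hb4 (by positivity))
        _ = s ^ (m/2) := by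
            rw [← mul_assoc, ← Real.rpow_add two_pos]
            simp
    obtain ⟨C, hC⟩ := sup_bound hcont hev
    refine ⟨max C 1, le_max_right _ _, fun s hs => ?_⟩
    have h1 := hC s hs
    have hspos : (0:ℝ) < s := lt_of_lt_of_le one_pos hs
    rw [div_le_iff₀ (Real.rpow_pos_of_pos hspos _)] at h1
    calc (1 + Real.log s) ^ |q| ≤ C * s ^ (m/2) := h1
      _ ≤ max C 1 * s ^ (m/2) :=
        mul_le_mul_of_nonneg_right (le_max_left _ _) (Real.rpow_nonneg hspos.le _)
  have hcstarpos : 0 < cstar := lt_of_lt_of_le one_pos hcstar1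
  -- Step E : γ
  obtain ⟨γ, hγpos, hγ⟩ : ∃ γ : ℝ, 0 < γ ∧ ∀ p, 2 ≤ p → ∀ s, 1 ≤ s →
      γ * (1 + Real.log s) ^ (-|q|) ≤ (Real.log p / Real.log (s * D₀ p)) ^ q := by
    rcases le_or_gt 0 q with hq0 | hq0
    · -- q ≥ 0
      set β₃ := max (1/Real.log 2) β₂ with hβ₃def
      have hβ₃pos : 0 < β₃ := lt_of_lt_of_le hβ₂pos (le_max_right _ _)
      refine ⟨β₃ ^ (-q), Real.rpow_pos_of_pos hβ₃pos _, fun p hp s hs => ?_⟩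
      have hspos : (0:ℝ) < s := lt_of_lt_of_le one_pos hs
      have hlogs : 0 ≤ Real.log s := Real.log_nonneg hs
      have hlogt : Real.log (s * D₀ p) = Real.log s + Real.log (D₀ p) :=
        Real.log_mul hspos.ne' (hD₀pos p hp).ne'
      have hltpos : 0 < Real.log (s * D₀ p) := by
        rw [hlogt]; linarith [hD₀logpos p hp]
      have hub : Real.log (s * D₀ p) ≤ β₃ * (1 + Real.log s) * Real.log p := by
        rw [hlogt]
        have h1 : Real.log s ≤ (1/Real.log 2) * Real.log s * Real.log p := by
          have := mul_le_mul_of_nonneg_left (hlp p hp) hlogs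
          rw [div_mul_eq_mul_div, one_mul, div_mul_eq_mul_div, le_div_iff₀ log2pos]
          nlinarith
        have h2 : Real.log (D₀ p) ≤ β₂ * Real.log p := hD₀ub p hp
        have h3 : (1/Real.log 2) * Real.log s * Real.log p ≤ β₃ * Real.log s * Real.log p := by
          apply mul_le_mul_of_nonneg_right _ (hlppos p hp).le
          exact mul_le_mul_of_nonneg_right (le_max_left _ _) hlogs
        have h4 : β₂ * Real.log p ≤ β₃ * Real.log p :=
          mul_le_mul_of_nonneg_right (le_max_right _ _) (hlppos p hp).le
        nlinarith
      have hratio : (β₃ * (1 + Real.log s))⁻¹ ≤ Real.log p / Real.log (s * D₀ p) := by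
        rw [inv_eq_one_div, div_le_div_iff₀ (by positivity) hltpos]
        nlinarith [hlppos p hp]
      have h5 : ((β₃ * (1 + Real.log s))⁻¹) ^ q ≤ (Real.log p / Real.log (s * D₀ p)) ^ q :=
        Real.rpow_le_rpow (by positivity) hratio hq0
      have hbase : (0:ℝ) ≤ β₃ * (1 + Real.log s) := by positivity
      calc β₃ ^ (-q) * (1 + Real.log s) ^ (-|q|)
          = (β₃ * (1 + Real.log s)) ^ (-q) := by
            rw [abs_of_nonneg hq0, Real.mul_rpow hβ₃pos.le (by positivity)]
        _ = ((β₃ * (1 + Real.log s)) ^ q)⁻¹ := Real.rpow_neg hbase q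
        _ = ((β₃ * (1 + Real.log s))⁻¹) ^ q := (Real.inv_rpow hbase q).symm
        _ ≤ _ := h5
    · -- q < 0
      refine ⟨(2*m) ^ q, Real.rpow_pos_of_pos (by positivity) _, fun p hp s hs => ?_⟩
      have hspos : (0:ℝ) < s := lt_of_lt_of_le one_pos hs
      have hlogs : 0 ≤ Real.log s := Real.log_nonneg hs
      have hlogt : Real.log (s * D₀ p) = Real.log s + Real.log (D₀ p) :=
        Real.log_mul hspos.ne' (hD₀pos p hp).ne'
      have hltpos : 0 < Real.log (s * D₀ p) := by
        rw [hlogt]; linarith [hD₀logpos p hp]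
      have hratpos : 0 < Real.log p / Real.log (s * D₀ p) :=
        div_pos (hlppos p hp) hltpos
      have hub : Real.log p / Real.log (s * D₀ p) ≤ 2*m := by
        rw [div_le_iff₀ hltpos]
        have h1 := hD₀lb p hp
        have h2 : Real.log (D₀ p) ≤ Real.log (s * D₀ p) := by rw [hlogt]; linarith
        have h3 : (2*m) * ((1/(2*m)) * Real.log p) = Real.log p := by field_simp
        nlinarith
      have h5 : (2*m) ^ q ≤ (Real.log p / Real.log (s * D₀ p)) ^ q :=
        Real.rpow_le_rpow_of_nonpos hratpos hub hq0.le
      have h6 : (1 + Real.log s) ^ (-|q|) ≤ 1 :=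
        Real.rpow_le_one_of_one_le_of_nonpos (by linarith) (by simp [abs_nonneg])
      calc (2*m) ^ q * (1 + Real.log s) ^ (-|q|) ≤ (2*m) ^ q * 1 :=
            mul_le_mul_of_nonneg_left h6 (Real.rpow_pos_of_pos (by positivity) _).le
        _ = (2*m) ^ q := mul_one _
        _ ≤ _ := h5
  -- Step E2 : the lower bound on φ(t)/2 in terms of s
  set c₇ := C₂ * K₀ ^ m * γ / (2 * cstar) with hc₇def
  have hc₇pos : 0 < c₇ := by
    rw [hc₇def]
    exact div_pos (mul_pos (mul_pos hC₂ (Real.rpow_pos_of_pos hK₀pos m)) hγpos)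
      (by positivity)
  have hFactB : ∀ p, 2 ≤ p → ∀ s, 1 ≤ s →
      c₇ * p * s ^ (m/2) ≤ C₂ * (s * D₀ p) ^ m * Real.log (s * D₀ p) ^ (-q) / 2 := by
    intro p hp s hs
    have hp0 := hppos p hp
    have hlppos' := hlppos p hp
    have hspos : (0:ℝ) < s := lt_of_lt_of_le one_pos hs
    have hlogs : 0 ≤ Real.log s := Real.log_nonneg hs
    have hlogt : Real.log (s * D₀ p) = Real.log s + Real.log (D₀ p) :=
      Real.log_mul hspos.ne' (hD₀pos p hp).ne'
    have hltpos : 0 < Real.log (s * D₀ p) := by rw [hlogt]; linarith [hD₀logpos p hp]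
    have hDm : (D₀ p) ^ m = K₀ ^ m * p * Real.log p ^ q := by
      rw [hD₀def]
      simp only
      rw [Real.mul_rpow (by positivity) (Real.rpow_nonneg hlppos'.le _),
        Real.mul_rpow hK₀pos.le (Real.rpow_nonneg hp0.le _),
        ← Real.rpow_mul hp0.le, ← Real.rpow_mul hlppos'.le,
        one_div_mul_cancel hm', Real.rpow_one, mul_comm r m]
    have htm : (s * D₀ p) ^ m = s ^ m * (D₀ p) ^ m :=
      Real.mul_rpow hspos.le (hD₀pos p hp).le
    have hre : Real.log p ^ q * Real.log (s * D₀ p) ^ (-q)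
        = (Real.log p / Real.log (s * D₀ p)) ^ q := by
      rw [Real.div_rpow hlppos'.le hltpos.le, Real.rpow_neg hltpos.le, div_eq_mul_inv]
    have hγ' := hγ p hp s hs
    have hcs := hcstar s hs
    have hb : (cstar * s ^ (m/2))⁻¹ ≤ (1 + Real.log s) ^ (-|q|) := by
      rw [Real.rpow_neg (by linarith)]
      exact inv_anti₀ (Real.rpow_pos_of_pos (by linarith) _) hcs
    have hRHSeq : C₂ * (s * D₀ p) ^ m * Real.log (s * D₀ p) ^ (-q) / 2
        = C₂ * s ^ m * K₀ ^ m * p * ((Real.log p / Real.log (s * D₀ p)) ^ q) / 2 := by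
      rw [htm, hDm, ← hre]
      ring
    rw [hRHSeq]
    have h1 : γ * (cstar * s ^ (m/2))⁻¹ ≤ (Real.log p / Real.log (s * D₀ p)) ^ q :=
      le_trans (mul_le_mul_of_nonneg_left hb hγpos.le) hγ'
    have hfac : 0 ≤ C₂ * s ^ m * K₀ ^ m * p := by
      have := Real.rpow_nonneg hspos.le m
      have := Real.rpow_nonneg hK₀pos.le m
      positivity
    have h2 := mul_le_mul_of_nonneg_left h1 hfac
    have hsm : s ^ m = s ^ (m/2) * s ^ (m/2) := by
      rw [← Real.rpow_add hspos]
      norm_num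
    have hLHSeq : c₇ * p * s ^ (m/2)
        = C₂ * s ^ m * K₀ ^ m * p * (γ * (cstar * s ^ (m/2))⁻¹) / 2 := by
      rw [hc₇def, hsm]
      have hsne : s ^ (m/2) ≠ 0 := (Real.rpow_pos_of_pos hspos _).ne'
      field_simp
    rw [hLHSeq]
    linarith
  -- Step F : S₁ and the final constant
  obtain ⟨S₁, hS₁⟩ : ∃ S₁, ∀ s, 1 ≤ s → Real.log s - c₇ * s ^ (m/2) ≤ S₁ := by
    apply sup_bound (c := 0)
    · exact logc1.sub (continuousOn_const.mul (continuousOn_id.rpow_const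
        (fun x hx => Or.inl (ne_of_gt (lt_of_lt_of_le one_pos hx)))))
    · have hlo := Asymptotics.isLittleO_iff.mp
        (isLittleO_log_rpow_atTop (by positivity : (0:ℝ) < m/2)) hc₇pos
      filter_upwards [hlo, eventually_gt_atTop (0:ℝ)] with s h1 h2
      rw [Real.norm_eq_abs, Real.norm_eq_abs,
        abs_of_nonneg (Real.rpow_nonneg h2.le _)] at h1
      have := le_abs_self (Real.log s)
      linarith
  set Kex := Real.exp (max S₁ 0) with hKexdef
  have hKex1 : 1 ≤ Kex := by
    rw [hKexdef, ← Real.exp_zero]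
    exact Real.exp_le_exp.mpr (le_max_right _ _)
  have hlogKex : Real.log Kex = max S₁ 0 := Real.log_exp _
  have hK₀ge1 : 1 ≤ K₀ := by
    rw [hK₀def]
    calc (1:ℝ) = Real.exp 0 := Real.exp_zero.symm
      _ ≤ _ := Real.exp_le_exp.mpr (le_trans zero_le_one (le_max_right _ _))
  refine ⟨K₀ * Kex, by nlinarith, ?_⟩
  intro p hp t ht
  have hp0 := hppos p hp
  have hlppos' := hlppos p hp
  have htpos : 0 < t := lt_of_lt_of_le (Real.exp_pos 2) ht
  have hlt2 : (2:ℝ) ≤ Real.log t := by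
    calc (2:ℝ) = Real.log (Real.exp 2) := (Real.log_exp 2).symm
      _ ≤ Real.log t := Real.log_le_log (Real.exp_pos 2) ht
  have hltpos : 0 < Real.log t := by linarith
  have hφnn : 0 ≤ C₂ * t ^ m * Real.log t ^ (-q) := by
    have h1 := Real.rpow_nonneg htpos.le m
    have h2 := Real.rpow_nonneg hltpos.le (-q)
    positivity
  have hD : K₀ * Kex * p ^ (1/m) * Real.log p ^ r = Kex * D₀ p := by
    rw [hD₀def]
    ring
  have hD₀p := hD₀pos p hp
  have hDpos : 0 < K₀ * Kex * p ^ (1/m) * Real.log p ^ r := by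
    rw [hD]
    exact mul_pos (by linarith) hD₀p
  rcases le_or_gt t (K₀ * Kex * p ^ (1/m) * Real.log p ^ r) with hcase | hcase
  · have h1 : t ^ p ≤ (K₀ * Kex * p ^ (1/m) * Real.log p ^ r) ^ p :=
      Real.rpow_le_rpow htpos.le hcase (by linarith)
    have h2 : Real.exp (-(C₂ * t ^ m * Real.log t ^ (-q)) / 2) ≤ 1 := by
      rw [← Real.exp_zero]
      exact Real.exp_le_exp.mpr (by linarith)
    calc t ^ p * Real.exp (-(C₂ * t ^ m * Real.log t ^ (-q)) / 2)
        ≤ t ^ p * 1 := mul_le_mul_of_nonneg_left h2 (Real.rpow_nonneg htpos.le p)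
      _ = t ^ p := mul_one _
      _ ≤ _ := h1
  · set s := t / D₀ p with hsdef
    have hs1 : 1 ≤ s := by
      rw [hsdef, le_div_iff₀ hD₀p]
      have hd1 : D₀ p ≤ Kex * D₀ p := le_mul_of_one_le_left hD₀p.le hKex1
      rw [hD] at hcase
      linarith
    have hts : t = s * D₀ p := by
      rw [hsdef]
      field_simp
    have hspos : (0:ℝ) < s := lt_of_lt_of_le one_pos hs1
    have hlogt' : Real.log t = Real.log s + Real.log (D₀ p) := by
      rw [hts, Real.log_mul hspos.ne' hD₀p.ne']
    have hFB := hFactB p hp s hs1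
    have hSb := hS₁ s hs1
    have hgoal : Real.log t * p + (-(C₂ * t ^ m * Real.log t ^ (-q)) / 2)
        ≤ Real.log (K₀ * Kex * p ^ (1/m) * Real.log p ^ r) * p := by
      have hlogD : Real.log (K₀ * Kex * p ^ (1/m) * Real.log p ^ r)
          = Real.log Kex + Real.log (D₀ p) := by
        rw [hD, Real.log_mul (by positivity) hD₀p.ne']
      have hφhalf : c₇ * p * s ^ (m/2) ≤ C₂ * t ^ m * Real.log t ^ (-q) / 2 := by
        rw [hts]
        exact hFB
      have hls : Real.log s ≤ Real.log Kex + c₇ * s ^ (m/2) := by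
        rw [hlogKex]
        have := le_max_left S₁ 0
        linarith
      have h6 := mul_le_mul_of_nonneg_left hls (by linarith : (0:ℝ) ≤ p)
      have h7 : Real.log t * p = (Real.log s + Real.log (D₀ p)) * p := by rw [hlogt']
      have h8 : Real.log (K₀ * Kex * p ^ (1/m) * Real.log p ^ r) * p
          = (Real.log Kex + Real.log (D₀ p)) * p := by rw [hlogD]
      linarith [h6, hφhalf, h7, h8]
    calc t ^ p * Real.exp (-(C₂ * t ^ m * Real.log t ^ (-q)) / 2)
        = Real.exp (Real.log t * p + (-(C₂ * t ^ m * Real.log t ^ (-q)) / 2)) := by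
          rw [Real.exp_add, Real.rpow_def_of_pos htpos]
      _ ≤ Real.exp (Real.log (K₀ * Kex * p ^ (1/m) * Real.log p ^ r) * p) :=
          Real.exp_le_exp.mpr hgoal
      _ = (K₀ * Kex * p ^ (1/m) * Real.log p ^ r) ^ p :=
          (Real.rpow_def_of_pos hDpos p).symm

lemma expphi_bound (C₂ m r : ℝ) (hC₂ : 0 < C₂) (hm : 0 < m) :
    ∃ cA : ℝ, 1 ≤ cA ∧ ∀ t, Real.exp 2 ≤ t →
      Real.exp (-(C₂ * t ^ m * Real.log t ^ (-(m * r))) / 2) * t ^ (2:ℝ) ≤ cA := by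
  set q := m * r with hqdef
  have he2 : (0:ℝ) < Real.exp 2 := Real.exp_pos 2
  have hcont : ContinuousOn
      (fun t : ℝ => Real.exp (-(C₂ * t ^ m * Real.log t ^ (-q)) / 2) * t ^ (2:ℝ))
      (Ici (Real.exp 2)) := by
    have hne : ∀ x : ℝ, x ∈ Ici (Real.exp 2) → x ≠ 0 :=
      fun x hx => (lt_of_lt_of_le he2 hx).ne'
    have hlogne : ∀ x : ℝ, x ∈ Ici (Real.exp 2) → Real.log x ≠ 0 := by
      intro x hx
      have : (2:ℝ) ≤ Real.log x := by
        calc (2:ℝ) = Real.log (Real.exp 2) := (Real.log_exp 2).symm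
          _ ≤ Real.log x := Real.log_le_log he2 hx
      linarith
    have hlogc : ContinuousOn Real.log (Ici (Real.exp 2)) :=
      Real.continuousOn_log.mono (fun x hx => by
        simp only [mem_compl_iff, mem_singleton_iff]
        exact hne x hx)
    apply ContinuousOn.mul
    · apply Real.continuous_exp.comp_continuousOn
      apply ContinuousOn.div_const
      apply ContinuousOn.neg
      exact ((continuousOn_const.mul (continuousOn_id.rpow_const
        (fun x hx => Or.inl (hne x hx)))).mul
        (hlogc.rpow_const (fun x hx => Or.inl (hlogne x hx))))
    · exact continuousOn_id.rpow_const (fun x hx => Or.inl (hne x hx))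
  have hev : ∀ᶠ t : ℝ in atTop,
      Real.exp (-(C₂ * t ^ m * Real.log t ^ (-q)) / 2) * t ^ (2:ℝ) ≤ 1 := by
    have hc4 : (0:ℝ) < C₂/4 := by positivity
    have hlo := Asymptotics.isLittleO_iff.mp
      (isLittleO_log_rpow_rpow_atTop (1+q) hm) hc4
    filter_upwards [hlo, Real.tendsto_log_atTop.eventually_ge_atTop 1,
        eventually_gt_atTop (0:ℝ)] with t h1 h2 h3
    have hltpos : (0:ℝ) < Real.log t := by linarith
    have h1' : Real.log t ^ (1+q) ≤ C₂/4 * t ^ m := by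
      rw [Real.norm_eq_abs, Real.norm_eq_abs,
        abs_of_nonneg (Real.rpow_nonneg hltpos.le _),
        abs_of_nonneg (Real.rpow_nonneg h3.le _)] at h1
      exact h1
    have e1 : Real.log t ^ (1+q) * Real.log t ^ (-q) = Real.log t := by
      rw [← Real.rpow_add hltpos]
      norm_num
    have h2' := mul_le_mul_of_nonneg_right h1' (Real.rpow_nonneg hltpos.le (-q))
    rw [e1] at h2'
    have hφ4 : 4 * Real.log t ≤ C₂ * t ^ m * Real.log t ^ (-q) := by linarith
    have e2 : t ^ (2:ℝ) = Real.exp (Real.log t * 2) := Real.rpow_def_of_pos h3 2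
    calc Real.exp (-(C₂ * t ^ m * Real.log t ^ (-q)) / 2) * t ^ (2:ℝ)
        = Real.exp (-(C₂ * t ^ m * Real.log t ^ (-q)) / 2 + Real.log t * 2) := by
          rw [e2, ← Real.exp_add]
      _ ≤ Real.exp 0 := Real.exp_le_exp.mpr (by linarith)
      _ = 1 := Real.exp_zero
  obtain ⟨C, hC⟩ := sup_bound hcont hev
  exact ⟨max C 1, le_max_right _ _, fun t ht => le_trans (hC t ht) (le_max_left _ _)⟩

lemma inf_bound {f : ℝ → ℝ} {a : ℝ} (hf : ContinuousOn f (Ici a))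
    (hpos : ∀ x, a ≤ x → 0 < f x) (h : ∀ᶠ x in atTop, 1 ≤ f x) :
    ∃ ε > 0, ∀ x, a ≤ x → ε ≤ f x := by
  obtain ⟨R, hR⟩ := eventually_atTop.mp h
  obtain ⟨x₀, hx₀mem, hx₀⟩ := (isCompact_Icc (a := a) (b := max a R)).exists_isMinOn
    ⟨a, le_rfl, le_max_left _ _⟩ (hf.mono (Icc_subset_Ici_self))
  refine ⟨min 1 (f x₀), lt_min one_pos (hpos x₀ hx₀mem.1), fun x hx => ?_⟩
  rcases le_or_gt x (max a R) with hxR | hxR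
  · exact le_trans (min_le_right _ _) (hx₀ ⟨hx, hxR⟩)
  · exact le_trans (min_le_left _ _) (hR x ((le_max_right a R).trans hxR.le))

lemma eps_exists (m r : ℝ) (hm : 0 < m) :
    ∃ ε : ℝ, 0 < ε ∧ ∀ p, 2 ≤ p → ε ≤ p ^ (1/m) * Real.log p ^ r := by
  have log2pos : (0:ℝ) < Real.log 2 := Real.log_pos one_lt_two
  have hppos : ∀ p : ℝ, (2:ℝ) ≤ p → (0:ℝ) < p := fun p hp => lt_of_lt_of_le two_pos hp
  have hlppos : ∀ p : ℝ, (2:ℝ) ≤ p → 0 < Real.log p := fun p hp =>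
    lt_of_lt_of_le log2pos (Real.log_le_log two_pos hp)
  have hcont : ContinuousOn (fun p : ℝ => p ^ (1/m) * Real.log p ^ r) (Ici 2) :=
    (continuousOn_id.rpow_const (fun x hx => Or.inl (hppos x hx).ne')).mul
      (logc2.rpow_const (fun x hx => Or.inl (hlppos x hx).ne'))
  have hpos : ∀ x : ℝ, 2 ≤ x → 0 < x ^ (1/m) * Real.log x ^ r :=
    fun x hx => mul_pos (Real.rpow_pos_of_pos (hppos x hx) _)
      (Real.rpow_pos_of_pos (hlppos x hx) _)
  have hev : ∀ᶠ p : ℝ in atTop, 1 ≤ p ^ (1/m) * Real.log p ^ r := by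
    rcases le_or_gt 0 r with hr | hr
    · filter_upwards [eventually_ge_atTop (1:ℝ),
        Real.tendsto_log_atTop.eventually_ge_atTop 1] with p h1 h2
      have a1 : (1:ℝ) ≤ p ^ (1/m) := by
        calc (1:ℝ) = 1 ^ (1/m : ℝ) := (Real.one_rpow _).symm
          _ ≤ p ^ (1/m) := Real.rpow_le_rpow zero_le_one h1 (by positivity)
      have a2 : (1:ℝ) ≤ Real.log p ^ r := by
        calc (1:ℝ) = 1 ^ r := (Real.one_rpow _).symm
          _ ≤ Real.log p ^ r := Real.rpow_le_rpow zero_le_one h2 hr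
      nlinarith
    · have hlo := Asymptotics.isLittleO_iff.mp
        (isLittleO_log_rpow_rpow_atTop (-r) (by positivity : (0:ℝ) < 1/m)) one_pos
      filter_upwards [hlo, eventually_gt_atTop (0:ℝ),
        Real.tendsto_log_atTop.eventually_ge_atTop 1] with p h1 h2 h3
      have hlp : (0:ℝ) < Real.log p := by linarith
      have h1' : Real.log p ^ (-r) ≤ p ^ (1/m) := by
        rw [Real.norm_eq_abs, Real.norm_eq_abs,
          abs_of_nonneg (Real.rpow_nonneg hlp.le _),
          abs_of_nonneg (Real.rpow_nonneg h2.le _), one_mul] at h1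
        exact h1
      have key : Real.log p ^ (-r) * Real.log p ^ r = 1 := by
        rw [← Real.rpow_add hlp]
        norm_num
      calc (1:ℝ) = Real.log p ^ (-r) * Real.log p ^ r := key.symm
        _ ≤ p ^ (1/m) * Real.log p ^ r :=
          mul_le_mul_of_nonneg_right h1' (Real.rpow_pos_of_pos hlp r).le
  obtain ⟨ε, hε, h⟩ := inf_bound hcont hpos hev
  exact ⟨ε, hε, h⟩

lemma rpow_add_le {a b z : ℝ} (ha : 0 ≤ a) (hb : 0 ≤ b) (h0 : 0 ≤ z) (h1 : z ≤ 1) :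
    (a + b) ^ z ≤ a ^ z + b ^ z := by
  have := NNReal.rpow_add_le_add_rpow a.toNNReal b.toNNReal h0 h1
  have h2 : ((a.toNNReal + b.toNNReal : ℝ≥0) : ℝ) = a + b := by
    simp [Real.coe_toNNReal _ ha, Real.coe_toNNReal _ hb]
  calc (a + b) ^ z = (((a.toNNReal + b.toNNReal : ℝ≥0) : ℝ)) ^ z := by rw [h2]
    _ = (((a.toNNReal + b.toNNReal) ^ z : ℝ≥0) : ℝ) := by rw [← NNReal.coe_rpow]
    _ ≤ (((a.toNNReal ^ z + b.toNNReal ^ z : ℝ≥0)) : ℝ) := by exact_mod_cast this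
    _ = a ^ z + b ^ z := by
        push_cast
        rw [Real.coe_toNNReal _ ha, Real.coe_toNNReal _ hb]

lemma rpow_self_inv_le_two {p : ℝ} (hp : 2 ≤ p) : p ^ (1/p : ℝ) ≤ 2 := by
  have hp0 : (0:ℝ) < p := by linarith
  have hlog : Real.log p ≤ p / Real.exp 1 := by
    have h1 : 0 < p / Real.exp 1 := div_pos hp0 (Real.exp_pos 1)
    have := Real.log_le_sub_one_of_pos h1
    rw [Real.log_div hp0.ne' (Real.exp_pos 1).ne', Real.log_exp] at this
    linarith
  have he : Real.exp 1 > 2.7182818283 := Real.exp_one_gt_d9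
  have hl2 : Real.log 2 > 0.6931471803 := Real.log_two_gt_d9
  have h2 : Real.log p * (1/p) ≤ Real.log 2 := by
    rw [mul_one_div]
    have h4 : Real.log p / p ≤ 1 / Real.exp 1 := by
      rw [div_le_div_iff₀ hp0 (Real.exp_pos 1)]
      calc Real.log p * Real.exp 1 ≤ (p / Real.exp 1) * Real.exp 1 :=
            mul_le_mul_of_nonneg_right hlog (Real.exp_pos 1).le
        _ = 1 * p := by field_simp [mul_comm]
    have h3 : 1 / Real.exp 1 ≤ Real.log 2 := by
      rw [div_le_iff₀ (Real.exp_pos 1)]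
      nlinarith
    linarith
  calc p ^ (1/p : ℝ) = Real.exp (Real.log p * (1/p)) := by
        rw [Real.rpow_def_of_pos hp0]
    _ ≤ Real.exp (Real.log 2) := Real.exp_le_exp.mpr h2
    _ = 2 := Real.exp_log two_pos


/-- The real-valued `L^p` norm `(E|f|^p)^{1/p}` for real exponent `p`. -/
noncomputable def lpNorm {Ω : Type*} [MeasurableSpace Ω] (μ : Measure Ω)
    (f : Ω → ℝ) (p : ℝ) : ℝ := (∫ ω, |f ω| ^ p ∂μ) ^ (1 / p)

/-- The tail function `T_ξ(x) = max(P(ξ > x), P(ξ < -x))`. -/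
noncomputable def tailFun {Ω : Type*} [MeasurableSpace Ω] (μ : Measure Ω)
    (ξ : Ω → ℝ) (x : ℝ) : ℝ :=
  max (μ {ω | x < ξ ω}).toReal (μ {ω | ξ ω < -x}).toReal

theorem tail_implies_moment_growth
    {Ω : Type*} [MeasurableSpace Ω] (μ : Measure Ω) [IsProbabilityMeasure μ]
    (ξ : Ω → ℝ) (hξ : Measurable ξ)
    (C₂ m r : ℝ) (hC₂ : 0 < C₂) (hm : 0 < m)
    (htail : ∀ x : ℝ, Real.exp 1 < x →
      tailFun μ ξ x ≤ Real.exp (-(C₂ * x ^ m * Real.log x ^ (-(m * r))))) :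
    ∃ C₁ : ℝ, 0 < C₁ ∧ ∀ p : ℝ, 2 ≤ p →
      lpNorm μ ξ p ≤ C₁ * p ^ (1 / m) * Real.log p ^ r := by
  obtain ⟨K, hK1, hKey⟩ := key_exists C₂ m r hC₂ hm
  obtain ⟨cA, hcA1, hcA⟩ := expphi_bound C₂ m r hC₂ hm
  obtain ⟨ε, hεpos, hε⟩ := eps_exists m r hm
  set x₂ := Real.exp 2 with hx₂def
  have hx₂pos : 0 < x₂ := Real.exp_pos 2
  have hIntOn : IntegrableOn (fun t : ℝ => t ^ (-3:ℝ)) (Ioi x₂) :=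
    integrableOn_Ioi_rpow_of_lt (by norm_num) hx₂pos
  set cJ := ∫ t in Ioi x₂, t ^ (-3:ℝ) with hcJdef
  have hcJnn : 0 ≤ cJ := setIntegral_nonneg measurableSet_Ioi
    (fun t ht => Real.rpow_nonneg (le_of_lt (lt_trans hx₂pos ht)) _)
  set cB := max (2 * cA * cJ) 1 with hcBdef
  have hcB1 : (1:ℝ) ≤ cB := le_max_right _ _
  have hcB0 : (0:ℝ) < cB := lt_of_lt_of_le one_pos hcB1
  have hK0 : (0:ℝ) < K := lt_of_lt_of_le one_pos hK1
  refine ⟨2 * x₂ / ε + 2 * cB * K, by positivity, fun p hp => ?_⟩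
  have hp0 : (0:ℝ) < p := by linarith
  have hlppos : 0 < Real.log p := Real.log_pos (by linarith)
  set D := K * p ^ (1/m) * Real.log p ^ r with hDdef
  have hgp : 0 < p ^ (1/m) * Real.log p ^ r :=
    mul_pos (Real.rpow_pos_of_pos hp0 _) (Real.rpow_pos_of_pos hlppos _)
  have hDpos : 0 < D := by
    rw [hDdef, mul_assoc]
    exact mul_pos hK0 hgp
  have hDple := hKey p hp
  -- tail measure bound
  have htail' : ∀ t : ℝ, x₂ < t → μ {ω | t < |ξ ω|} ≤
      ENNReal.ofReal (2 * Real.exp (-(C₂ * t ^ m * Real.log t ^ (-(m*r))))) := by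
    intro t ht
    have hte : Real.exp 1 < t := lt_trans (Real.exp_lt_exp.mpr one_lt_two) ht
    have hsub : {ω | t < |ξ ω|} ⊆ {ω | t < ξ ω} ∪ {ω | ξ ω < -t} := by
      intro ω hω
      simp only [mem_setOf_eq, mem_union] at *
      rcases lt_abs.mp hω with h | h
      · exact Or.inl h
      · exact Or.inr (by linarith)
    have hT := htail t hte
    have h1 : μ {ω | t < ξ ω} ≤
        ENNReal.ofReal (Real.exp (-(C₂ * t ^ m * Real.log t ^ (-(m*r))))) := by
      rw [ENNReal.le_ofReal_iff_toReal_le (measure_ne_top μ _) (Real.exp_nonneg _)]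
      exact le_trans (le_max_left _ _) hT
    have h2 : μ {ω | ξ ω < -t} ≤
        ENNReal.ofReal (Real.exp (-(C₂ * t ^ m * Real.log t ^ (-(m*r))))) := by
      rw [ENNReal.le_ofReal_iff_toReal_le (measure_ne_top μ _) (Real.exp_nonneg _)]
      exact le_trans (le_max_right _ _) hT
    calc μ {ω | t < |ξ ω|} ≤ μ ({ω | t < ξ ω} ∪ {ω | ξ ω < -t}) := measure_mono hsub
      _ ≤ μ {ω | t < ξ ω} + μ {ω | ξ ω < -t} := measure_union_le _ _
      _ ≤ ENNReal.ofReal (Real.exp (-(C₂ * t ^ m * Real.log t ^ (-(m*r)))))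
          + ENNReal.ofReal (Real.exp (-(C₂ * t ^ m * Real.log t ^ (-(m*r))))) :=
        add_le_add h1 h2
      _ = ENNReal.ofReal (2 * Real.exp (-(C₂ * t ^ m * Real.log t ^ (-(m*r))))) := by
        rw [← ENNReal.ofReal_add (Real.exp_nonneg _) (Real.exp_nonneg _), two_mul]
  -- layer cake
  have habs_nn : 0 ≤ᵐ[μ] fun ω => |ξ ω| := ae_of_all _ fun ω => abs_nonneg _
  have habs_m : AEMeasurable (fun ω => |ξ ω|) μ := hξ.abs.aemeasurable
  have hLC := MeasureTheory.lintegral_rpow_eq_lintegral_meas_lt_mul μ habs_nn habs_m hp0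
  set g : ℝ → ℝ≥0∞ := fun t => μ {a | t < |ξ a|} * ENNReal.ofReal (t ^ (p-1)) with hgdef
  have hsplit : ∫⁻ t in Ioi (0:ℝ), g t = (∫⁻ t in Ioc 0 x₂, g t) + ∫⁻ t in Ioi x₂, g t := by
    rw [← lintegral_union measurableSet_Ioi (Ioc_disjoint_Ioi le_rfl),
      Ioc_union_Ioi_eq_Ioi hx₂pos.le]
  have hI₁ : ∫⁻ t in Ioc 0 x₂, g t ≤ ENNReal.ofReal (x₂ ^ p) := by
    have hb : ∀ t ∈ Ioc (0:ℝ) x₂, g t ≤ ENNReal.ofReal (x₂ ^ (p-1)) := by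
      intro t ht
      calc g t ≤ 1 * ENNReal.ofReal (t ^ (p-1)) := mul_le_mul_left prob_le_one _
        _ = ENNReal.ofReal (t ^ (p-1)) := one_mul _
        _ ≤ ENNReal.ofReal (x₂ ^ (p-1)) := ENNReal.ofReal_le_ofReal
            (Real.rpow_le_rpow ht.1.le ht.2 (by linarith))
    have e : x₂ ^ (p-1) * x₂ = x₂ ^ p := by
      nth_rewrite 2 [← Real.rpow_one x₂]
      rw [← Real.rpow_add hx₂pos]
      norm_num
    calc ∫⁻ t in Ioc 0 x₂, g t ≤ ∫⁻ _ in Ioc 0 x₂, ENNReal.ofReal (x₂ ^ (p-1)) :=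
          setLIntegral_mono' measurableSet_Ioc hb
      _ = ENNReal.ofReal (x₂ ^ (p-1)) * volume (Ioc 0 x₂) := setLIntegral_const _ _
      _ = ENNReal.ofReal (x₂ ^ (p-1)) * ENNReal.ofReal x₂ := by
          rw [Real.volume_Ioc]
          norm_num
      _ = ENNReal.ofReal (x₂ ^ (p-1) * x₂) :=
          (ENNReal.ofReal_mul (Real.rpow_nonneg hx₂pos.le _)).symm
      _ = ENNReal.ofReal (x₂ ^ p) := by rw [e]
  have hI₂ : ∫⁻ t in Ioi x₂, g t ≤ ENNReal.ofReal (2 * cA * cJ * D ^ p) := by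
    have hb : ∀ t ∈ Ioi x₂, g t ≤ ENNReal.ofReal ((2 * cA * D ^ p) * t ^ (-3:ℝ)) := by
      intro t ht
      have htx : x₂ ≤ t := le_of_lt ht
      have htpos : 0 < t := lt_of_lt_of_le hx₂pos htx
      have hKey' := hDple t htx
      have hcA' := hcA t htx
      have hreal : 2 * Real.exp (-(C₂ * t ^ m * Real.log t ^ (-(m*r)))) * t ^ (p-1)
          ≤ 2 * cA * D ^ p * t ^ (-3:ℝ) := by
        have e3 : Real.exp (-(C₂ * t ^ m * Real.log t ^ (-(m*r))))
            = Real.exp (-(C₂ * t ^ m * Real.log t ^ (-(m*r))) / 2)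
              * Real.exp (-(C₂ * t ^ m * Real.log t ^ (-(m*r))) / 2) := by
          rw [← Real.exp_add]
          congr 1
          ring
        have e4 : t ^ (p-1) = t ^ p * t ^ (-1:ℝ) := by
          rw [← Real.rpow_add htpos]
          congr 1
        have e5 : Real.exp (-(C₂ * t ^ m * Real.log t ^ (-(m*r))) / 2) ≤ cA * t ^ (-2:ℝ) := by
          have h6 : t ^ (2:ℝ) * t ^ (-2:ℝ) = 1 := by
            rw [← Real.rpow_add htpos]
            norm_num
          calc Real.exp (-(C₂ * t ^ m * Real.log t ^ (-(m*r))) / 2)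
              = (Real.exp (-(C₂ * t ^ m * Real.log t ^ (-(m*r))) / 2) * t ^ (2:ℝ))
                * t ^ (-2:ℝ) := by
                conv_rhs => rw [mul_assoc, h6, mul_one]
            _ ≤ cA * t ^ (-2:ℝ) :=
                mul_le_mul_of_nonneg_right hcA' (Real.rpow_nonneg htpos.le _)
        have e7 : t ^ (-2:ℝ) * t ^ (-1:ℝ) = t ^ (-3:ℝ) := by
          rw [← Real.rpow_add htpos]
          norm_num
        have hDp_nn : (0:ℝ) ≤ D ^ p := Real.rpow_nonneg hDpos.le _
        have hexp_nn : (0:ℝ) ≤ Real.exp (-(C₂ * t ^ m * Real.log t ^ (-(m*r))) / 2) :=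
          Real.exp_nonneg _
        calc 2 * Real.exp (-(C₂ * t ^ m * Real.log t ^ (-(m*r)))) * t ^ (p-1)
            = 2 * ((t ^ p * Real.exp (-(C₂ * t ^ m * Real.log t ^ (-(m*r))) / 2))
              * (Real.exp (-(C₂ * t ^ m * Real.log t ^ (-(m*r))) / 2) * t ^ (-1:ℝ))) := by
              rw [e3, e4]
              ring
          _ ≤ 2 * (D ^ p * ((cA * t ^ (-2:ℝ)) * t ^ (-1:ℝ))) := by
              apply mul_le_mul_of_nonneg_left _ (by norm_num : (0:ℝ) ≤ 2)
              apply mul_le_mul hKey'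
                (mul_le_mul_of_nonneg_right e5 (Real.rpow_nonneg htpos.le _))
                (mul_nonneg hexp_nn (Real.rpow_nonneg htpos.le _))
                hDp_nn
          _ = 2 * cA * D ^ p * t ^ (-3:ℝ) := by
              rw [mul_assoc cA, e7]
              ring
      calc g t ≤ ENNReal.ofReal (2 * Real.exp (-(C₂ * t ^ m * Real.log t ^ (-(m*r)))))
            * ENNReal.ofReal (t ^ (p-1)) := mul_le_mul_left (htail' t ht) _
        _ = ENNReal.ofReal (2 * Real.exp (-(C₂ * t ^ m * Real.log t ^ (-(m*r)))) * t ^ (p-1)) :=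
            (ENNReal.ofReal_mul (by positivity)).symm
        _ ≤ ENNReal.ofReal (2 * cA * D ^ p * t ^ (-3:ℝ)) := ENNReal.ofReal_le_ofReal hreal
    have hInt : IntegrableOn (fun t : ℝ => (2 * cA * D ^ p) * t ^ (-3:ℝ)) (Ioi x₂) :=
      hIntOn.const_mul _
    have hae : 0 ≤ᵐ[volume.restrict (Ioi x₂)] fun t : ℝ => (2 * cA * D ^ p) * t ^ (-3:ℝ) := by
      filter_upwards [ae_restrict_mem measurableSet_Ioi] with t ht
      have htpos : 0 < t := lt_trans hx₂pos ht
      have := Real.rpow_nonneg htpos.le (-3:ℝ)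
      positivity
    calc ∫⁻ t in Ioi x₂, g t
        ≤ ∫⁻ t in Ioi x₂, ENNReal.ofReal ((2 * cA * D ^ p) * t ^ (-3:ℝ)) :=
          setLIntegral_mono' measurableSet_Ioi hb
      _ = ENNReal.ofReal (∫ t in Ioi x₂, (2 * cA * D ^ p) * t ^ (-3:ℝ)) :=
          (MeasureTheory.ofReal_integral_eq_lintegral_ofReal hInt hae).symm
      _ = ENNReal.ofReal (2 * cA * cJ * D ^ p) := by
          rw [MeasureTheory.integral_const_mul, hcJdef]
          congr 1
          ring
  set Mtot := p * (x₂ ^ p + cB * D ^ p) with hMdef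
  have hMnn : (0:ℝ) ≤ x₂ ^ p + cB * D ^ p := by
    have h1 := Real.rpow_nonneg hx₂pos.le p
    have h2 := Real.rpow_nonneg hDpos.le p
    nlinarith
  have hfin : ∫⁻ ω, ENNReal.ofReal (|ξ ω| ^ p) ∂μ ≤ ENNReal.ofReal Mtot := by
    rw [hLC]
    have hsum : (∫⁻ t in Ioi (0:ℝ), g t) ≤ ENNReal.ofReal (x₂ ^ p + cB * D ^ p) := by
      rw [hsplit]
      calc (∫⁻ t in Ioc 0 x₂, g t) + ∫⁻ t in Ioi x₂, g t
          ≤ ENNReal.ofReal (x₂ ^ p) + ENNReal.ofReal (2 * cA * cJ * D ^ p) :=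
            add_le_add hI₁ hI₂
        _ = ENNReal.ofReal (x₂ ^ p + 2 * cA * cJ * D ^ p) := by
            have hq : (0:ℝ) ≤ 2 * cA * cJ * D ^ p :=
              mul_nonneg (mul_nonneg (mul_nonneg (by norm_num) (by linarith)) hcJnn)
                (Real.rpow_nonneg hDpos.le p)
            rw [← ENNReal.ofReal_add (Real.rpow_nonneg hx₂pos.le _) hq]
        _ ≤ ENNReal.ofReal (x₂ ^ p + cB * D ^ p) := by
            apply ENNReal.ofReal_le_ofReal
            have h1 : 2 * cA * cJ ≤ cB := le_max_left _ _
            have h2 := Real.rpow_nonneg hDpos.le p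
            nlinarith
    calc ENNReal.ofReal p * ∫⁻ t in Ioi (0:ℝ), g t
        ≤ ENNReal.ofReal p * ENNReal.ofReal (x₂ ^ p + cB * D ^ p) :=
          mul_le_mul_right hsum _
      _ = ENNReal.ofReal Mtot := by
          rw [← ENNReal.ofReal_mul hp0.le]
  have hmeas : AEStronglyMeasurable (fun ω => |ξ ω| ^ p) μ :=
    ((Real.continuous_rpow_const hp0.le).measurable.comp hξ.abs).aestronglyMeasurable
  have hnn : 0 ≤ᵐ[μ] fun ω => |ξ ω| ^ p :=
    ae_of_all _ fun ω => Real.rpow_nonneg (abs_nonneg _) _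
  have hval : ∫ ω, |ξ ω| ^ p ∂μ ≤ Mtot := by
    rw [MeasureTheory.integral_eq_lintegral_of_nonneg_ae hnn hmeas]
    refine ENNReal.toReal_le_of_le_ofReal ?_ hfin
    rw [hMdef]
    positivity
  -- final estimate
  have hint_nn : 0 ≤ ∫ ω, |ξ ω| ^ p ∂μ :=
    integral_nonneg fun ω => Real.rpow_nonneg (abs_nonneg _) _
  have h1p0 : (0:ℝ) ≤ 1/p := by positivity
  have h1p1 : 1/p ≤ 1 := by
    rw [div_le_one hp0]
    linarith
  have hx₂p : (x₂ ^ p) ^ (1/p : ℝ) = x₂ := by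
    rw [← Real.rpow_mul hx₂pos.le, mul_one_div_cancel hp0.ne', Real.rpow_one]
  have hDp : (D ^ p) ^ (1/p : ℝ) = D := by
    rw [← Real.rpow_mul hDpos.le, mul_one_div_cancel hp0.ne', Real.rpow_one]
  have hp2 : p ^ (1/p : ℝ) ≤ 2 := rpow_self_inv_le_two hp
  have hcBp : cB ^ (1/p : ℝ) ≤ cB := by
    calc cB ^ (1/p : ℝ) ≤ cB ^ (1:ℝ) := Real.rpow_le_rpow_of_exponent_le hcB1 h1p1
      _ = cB := Real.rpow_one _
  have hstep : lpNorm μ ξ p ≤ 2 * x₂ + 2 * cB * D := by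
    unfold _root_.lpNorm
    calc (∫ ω, |ξ ω| ^ p ∂μ) ^ (1/p : ℝ)
        ≤ Mtot ^ (1/p : ℝ) := Real.rpow_le_rpow hint_nn hval h1p0
      _ = (p * x₂ ^ p + p * (cB * D ^ p)) ^ (1/p : ℝ) := by
          rw [hMdef]
          ring_nf
      _ ≤ (p * x₂ ^ p) ^ (1/p : ℝ) + (p * (cB * D ^ p)) ^ (1/p : ℝ) := by
          apply rpow_add_le _ _ h1p0 h1p1
          · positivity
          · exact mul_nonneg hp0.le (mul_nonneg hcB0.le (Real.rpow_nonneg hDpos.le p))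
      _ = p ^ (1/p : ℝ) * x₂ + p ^ (1/p : ℝ) * (cB ^ (1/p : ℝ) * D) := by
          rw [Real.mul_rpow hp0.le (Real.rpow_nonneg hx₂pos.le _), hx₂p,
            Real.mul_rpow hp0.le (mul_nonneg hcB0.le (Real.rpow_nonneg hDpos.le p)),
            Real.mul_rpow hcB0.le (Real.rpow_nonneg hDpos.le _), hDp]
      _ ≤ 2 * x₂ + 2 * (cB * D) := by
          apply add_le_add
          · exact mul_le_mul_of_nonneg_right hp2 hx₂pos.le
          · apply mul_le_mul hp2
              (mul_le_mul_of_nonneg_right hcBp hDpos.le)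
              (mul_nonneg (Real.rpow_nonneg hcB0.le _) hDpos.le)
              (by norm_num)
      _ = 2 * x₂ + 2 * cB * D := by ring
  have h2x : 2 * x₂ ≤ (2 * x₂ / ε) * (p ^ (1/m) * Real.log p ^ r) := by
    rw [div_mul_eq_mul_div, le_div_iff₀ hεpos]
    exact mul_le_mul_of_nonneg_left (hε p hp) (by positivity)
  calc lpNorm μ ξ p ≤ 2 * x₂ + 2 * cB * D := hstep
    _ ≤ (2 * x₂ / ε) * (p ^ (1/m) * Real.log p ^ r) + 2 * cB * D := by linarith
    _ = (2 * x₂ / ε + 2 * cB * K) * p ^ (1/m) * Real.log p ^ r := by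
        rw [hDdef]
        ring
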